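/- Let S be a noetherian ring graded by a free abelian group D of finite rank, let M = ⊕_{i=1}^r ℕd_i ⊆ D be a quadrant (the d_i being part of a ℤ-basis of D), and let e ∈ D. Then S_{M+e} = ⊕_{d∈M} S_{d+e} is a finitely generated module over the Veronese subring S_M = ⊕_{d∈M} S_d. -/

import Mathlib

set_option linter.unusedSectionVars false

open DirectSum

section Grp
variable {D S : Type*} [AddCommGroup D] [DecidableEq D] [CommRing S]
  (𝒜 : D → AddSubgroup S) [GradedRing 𝒜]

/-- The additive subgroup of `S` generated by the pieces with degrees in `X`. -/
def G (X : Set D) : AddSubgroup S := AddSubgroup.closure (⋃ d ∈ X, (𝒜 d : Set S))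

variable {𝒜}

lemma piece_le_G {X : Set D} {d : D} (hd : d ∈ X) : (𝒜 d : Set S) ⊆ G 𝒜 X := by
  intro x hx
  exact AddSubgroup.subset_closure (Set.mem_biUnion hd hx)

lemma decompose_eq_zero_of_mem_G {X : Set D} {x : S} (hx : x ∈ G 𝒜 X) {d : D} (hd : d ∉ X) :
    (decompose 𝒜 x d : S) = 0 := by
  induction hx using AddSubgroup.closure_induction with
  | mem y hy =>
    obtain ⟨c, hc, hyc⟩ := Set.mem_iUnion₂.1 hy
    have hne : c ≠ d := fun h => hd (h ▸ hc)
    exact DirectSum.decompose_of_mem_ne 𝒜 hyc hne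
  | zero => simp
  | add y z _ _ hy hz => rw [decompose_add]; simp [hy, hz]
  | neg y _ hy =>
    rw [decompose_neg, DFinsupp.neg_apply]
    rw [show ((-(decompose 𝒜 y d) : (𝒜 d)) : S) = -((decompose 𝒜 y d : S)) from rfl, hy, neg_zero]

lemma mem_G_of_decompose {X : Set D} {x : S}
    (h : ∀ d, (decompose 𝒜 x d : S) ≠ 0 → d ∈ X) : x ∈ G 𝒜 X := by
  classical
  rw [← DirectSum.sum_support_decompose 𝒜 x]
  refine AddSubgroup.sum_mem _ (fun d hd => ?_)
  have hne : (decompose 𝒜 x d : S) ≠ 0 := by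
    intro h0
    exact (DFinsupp.mem_support_iff.1 hd) (Subtype.ext h0)
  exact piece_le_G (h d hne) (decompose 𝒜 x d).2

lemma mem_G_iff {X : Set D} {x : S} :
    x ∈ G 𝒜 X ↔ ∀ d, (decompose 𝒜 x d : S) ≠ 0 → d ∈ X := by
  constructor
  · intro hx d hd
    by_contra hdX
    exact hd (decompose_eq_zero_of_mem_G hx hdX)
  · exact mem_G_of_decompose

lemma G_mono {X Y : Set D} (h : X ⊆ Y) : (G 𝒜 X : Set S) ⊆ G 𝒜 Y := by
  intro x hx
  exact mem_G_of_decompose fun d hd => h (mem_G_iff.1 hx d hd)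

lemma mem_G_inter {X Y : Set D} {x : S} (hx : x ∈ G 𝒜 X) (hy : x ∈ G 𝒜 Y) :
    x ∈ G 𝒜 (X ∩ Y) :=
  mem_G_of_decompose fun d hd => ⟨mem_G_iff.1 hx d hd, mem_G_iff.1 hy d hd⟩

lemma mul_mem_G {X Y Z : Set D} (hZ : ∀ a ∈ X, ∀ b ∈ Y, a + b ∈ Z)
    {x y : S} (hx : x ∈ G 𝒜 X) (hy : y ∈ G 𝒜 Y) : x * y ∈ G 𝒜 Z := by
  induction hx using AddSubgroup.closure_induction with
  | mem x' hx' =>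
    obtain ⟨a, ha, hxa⟩ := Set.mem_iUnion₂.1 hx'
    induction hy using AddSubgroup.closure_induction with
    | mem y' hy' =>
      obtain ⟨c, hc, hyc⟩ := Set.mem_iUnion₂.1 hy'
      exact piece_le_G (hZ a ha c hc) (SetLike.mul_mem_graded hxa hyc)
    | zero => simp only [mul_zero]; exact zero_mem _
    | add u v _ _ hu hv => rw [mul_add]; exact add_mem hu hv
    | neg u _ hu => rw [mul_neg]; exact neg_mem hu
  | zero => simp only [zero_mul]; exact zero_mem _
  | add u v _ _ hu hv => rw [add_mul]; exact add_mem hu hv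
  | neg u _ hu => rw [neg_mul]; exact neg_mem hu

end Grp

section Sel
variable {D S : Type*} [AddCommGroup D] [DecidableEq D] [CommRing S]
  (𝒜 : D → AddSubgroup S) [GradedRing 𝒜]

/-- Sum of the homogeneous components of `x` whose degree satisfies `Q`. -/
noncomputable def sel (Q : D → Prop) [DecidablePred Q] (x : S) : S :=
  (decompose 𝒜).symm ((decompose 𝒜 x).filter Q)

variable {𝒜}
variable {Q : D → Prop} [DecidablePred Q]

lemma decompose_sel (x : S) (d : D) :
    ((decompose 𝒜 (sel 𝒜 Q x) d : S)) = if Q d then (decompose 𝒜 x d : S) else 0 := by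
  rw [sel, Equiv.apply_symm_apply, DFinsupp.filter_apply]
  split <;> simp

lemma sel_add (x y : S) : sel 𝒜 Q (x + y) = sel 𝒜 Q x + sel 𝒜 Q y := by
  rw [sel, sel, sel, decompose_add, DFinsupp.filter_add, decompose_symm_add]

lemma sel_mem_G {X : Set D} {x : S} (hx : x ∈ G 𝒜 X) : sel 𝒜 Q x ∈ G 𝒜 {d ∈ X | Q d} := by
  refine mem_G_of_decompose fun d hd => ?_
  rw [decompose_sel] at hd
  by_cases hQ : Q d
  · rw [if_pos hQ] at hd
    exact ⟨mem_G_iff.1 hx d hd, hQ⟩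
  · rw [if_neg hQ] at hd
    exact absurd rfl hd

lemma sel_eq_self {X : Set D} {x : S} (hx : x ∈ G 𝒜 X) (hX : ∀ d ∈ X, Q d) :
    sel 𝒜 Q x = x := by
  apply (decompose 𝒜).injective
  refine DFinsupp.ext fun d => ?_
  apply Subtype.ext
  rw [decompose_sel]
  by_cases hQ : Q d
  · rw [if_pos hQ]
  · rw [if_neg hQ]
    by_contra h
    exact hQ (hX d (mem_G_iff.1 hx d fun h0 => h (h0.symm)))

lemma sel_compl_eq (x : S) : x - sel 𝒜 Q x = sel 𝒜 (fun d => ¬ Q d) x := by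
  apply (decompose 𝒜).injective
  refine DFinsupp.ext fun d => ?_
  apply Subtype.ext
  rw [decompose_sub]
  rw [show ((((decompose 𝒜) x - (decompose 𝒜) (sel 𝒜 Q x)) d : 𝒜 d) : S)
      = (decompose 𝒜 x d : S) - (decompose 𝒜 (sel 𝒜 Q x) d : S) from by
    rw [DFinsupp.sub_apply]; rfl]
  rw [decompose_sel, decompose_sel]
  by_cases hQ : Q d <;> simp [hQ]

lemma sel_of_mem_piece {c : D} {x : S} (hx : x ∈ 𝒜 c) :
    sel 𝒜 Q x = if Q c then x else 0 := by
  apply (decompose 𝒜).injective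
  refine DFinsupp.ext fun d => ?_
  apply Subtype.ext
  rw [decompose_sel]
  by_cases hdc : d = c
  · subst hdc
    split <;> simp [DirectSum.decompose_of_mem_same 𝒜 hx]
  · have h0 : (decompose 𝒜 x d : S) = 0 := DirectSum.decompose_of_mem_ne 𝒜 hx (Ne.symm hdc)
    split <;> split <;>
      simp [DirectSum.decompose_zero, h0, DirectSum.decompose_of_mem_ne 𝒜 hx (Ne.symm hdc)]

lemma sel_smul_homog (φ : D →+ ℤ) (m : ℤ) {z : S} (hz : z ∈ G 𝒜 {d | φ d = m}) (x : S) :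
    sel 𝒜 (fun d => φ d = m) (x * z) = sel 𝒜 (fun d => φ d = 0) x * z := by
  induction hz using AddSubgroup.closure_induction with
  | mem z' hz' =>
    obtain ⟨c, hc, hzc⟩ := Set.mem_iUnion₂.1 hz'
    have hcm : φ c = m := hc
    induction x using DirectSum.Decomposition.inductionOn 𝒜 with
    | zero => simp [sel, DirectSum.decompose_zero]
    | homogeneous x' =>
      rename_i c''
      have hmul : (x' : S) * z' ∈ 𝒜 (c'' + c) := SetLike.mul_mem_graded x'.2 hzc
      rw [sel_of_mem_piece hmul, sel_of_mem_piece x'.2]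
      have hiff : φ (c'' + c) = m ↔ φ c'' = 0 := by
        rw [map_add, hcm]; omega
      by_cases hc0 : φ c'' = 0
      · rw [if_pos (hiff.2 hc0), if_pos hc0]
      · rw [if_neg (fun h => hc0 (hiff.1 h)), if_neg hc0, zero_mul]
    | add u v hu hv => rw [add_mul, sel_add, sel_add, hu, hv, add_mul]
  | zero => simp [sel, DirectSum.decompose_zero]
  | add u v _ _ hu hv => rw [mul_add, sel_add, hu, hv, mul_add]
  | neg u _ hu =>
    have h1 : x * -u = -(x * u) := by ring
    have h2 : ∀ (w : S), sel 𝒜 (fun d => φ d = m) (-w) = - sel 𝒜 (fun d => φ d = m) w := by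
      intro w
      rw [sel, sel, decompose_neg, DFinsupp.filter_neg, decompose_symm_neg]
    rw [h1, h2, hu, mul_neg]

end Sel

section Util

lemma fg_of_le_fg {R M : Type*} [CommRing R] [AddCommGroup M] [Module R M] [IsNoetherianRing R]
    {N P : Submodule R M} (hN : N.FG) (hPN : P ≤ N) : P.FG := by
  haveI := isNoetherian_of_fg_of_noetherian N hN
  have h1 : (Submodule.comap N.subtype P).FG := IsNoetherian.noetherian _
  have h2 := h1.map N.subtype
  rwa [Submodule.map_comap_subtype, inf_eq_right.2 hPN] at h2

lemma exists_finset_span {R M : Type*} [CommRing R] [AddCommGroup M] [Module R M]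
    (X : Set M) (h : (Submodule.span R X).FG) :
    ∃ F : Finset M, ↑F ⊆ X ∧ Submodule.span R (↑F : Set M) = Submodule.span R X := by
  classical
  obtain ⟨F₀, hF₀⟩ := h
  have key : ∀ g ∈ F₀, ∃ t : Finset M, ↑t ⊆ X ∧ g ∈ Submodule.span R (↑t : Set M) := by
    intro g hg
    refine Submodule.mem_span_finite_of_mem_span ?_
    rw [← hF₀]
    exact Submodule.subset_span hg
  choose t ht1 ht2 using key
  refine ⟨F₀.attach.biUnion (fun g => t g.1 g.2), ?_, ?_⟩
  · intro x hx
    simp only [Finset.coe_biUnion, Set.mem_iUnion, Finset.mem_coe] at hx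
    obtain ⟨g, _, hx⟩ := hx
    exact ht1 g.1 g.2 hx
  · refine le_antisymm (Submodule.span_mono ?_) ?_
    · intro x hx
      simp only [Finset.coe_biUnion, Set.mem_iUnion, Finset.mem_coe] at hx
      obtain ⟨g, _, hx⟩ := hx
      exact ht1 g.1 g.2 hx
    · rw [← hF₀]
      refine Submodule.span_le.2 fun g hg => ?_
      refine Submodule.span_mono ?_ (ht2 g hg)
      intro y hy
      simp only [Finset.coe_biUnion, Set.mem_iUnion, Finset.mem_coe]
      exact ⟨⟨g, hg⟩, Finset.mem_attach _ _, hy⟩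

end Util

section RgNg
variable {D S : Type*} [AddCommGroup D] [DecidableEq D] [CommRing S]
  (𝒜 : D → AddSubgroup S) [GradedRing 𝒜]

/-- The subring of `S` generated by the pieces with degrees in `T`. -/
def RgS (T : Set D) : Subring S := Subring.closure (⋃ d ∈ T, (𝒜 d : Set S))

/-- The `RgS 𝒜 T`-submodule of `S` generated by the pieces with degrees in `U`. -/
def NgS (T U : Set D) : Submodule (RgS 𝒜 T) S :=
  Submodule.span (RgS 𝒜 T) (⋃ d ∈ U, (𝒜 d : Set S))

variable {𝒜}

lemma mem_RgS {T : Set D} (h0 : (0:D) ∈ T) (hT : ∀ a ∈ T, ∀ b ∈ T, a + b ∈ T) {x : S} :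
    x ∈ RgS 𝒜 T ↔ x ∈ G 𝒜 T := by
  constructor
  · intro hx
    induction hx using Subring.closure_induction with
    | mem y hy =>
      obtain ⟨c, hc, hyc⟩ := Set.mem_iUnion₂.1 hy
      exact piece_le_G hc hyc
    | one => exact piece_le_G h0 (SetLike.one_mem_graded 𝒜)
    | zero => exact zero_mem _
    | add u v _ _ hu hv => exact add_mem hu hv
    | neg u _ hu => exact neg_mem hu
    | mul u v _ _ hu hv => exact mul_mem_G hT hu hv
  · intro hx
    induction hx using AddSubgroup.closure_induction with
    | mem y hy => exact Subring.subset_closure hy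
    | zero => exact zero_mem _
    | add u v _ _ hu hv => exact add_mem hu hv
    | neg u _ hu => exact neg_mem hu

lemma smul_in_S {T : Set D} (r : RgS 𝒜 T) (x : S) : r • x = (r : S) * x := rfl

lemma mem_NgS {T U : Set D} (h0 : (0:D) ∈ T) (hT : ∀ a ∈ T, ∀ b ∈ T, a + b ∈ T)
    (hTU : ∀ a ∈ T, ∀ b ∈ U, a + b ∈ U) {x : S} :
    x ∈ NgS 𝒜 T U ↔ x ∈ G 𝒜 U := by
  constructor
  · intro hx
    induction hx using Submodule.span_induction with
    | mem y hy =>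
      obtain ⟨c, hc, hyc⟩ := Set.mem_iUnion₂.1 hy
      exact piece_le_G hc hyc
    | zero => exact zero_mem _
    | add u v _ _ hu hv => exact add_mem hu hv
    | smul r y _ hy =>
      rw [smul_in_S]
      exact mul_mem_G hTU ((mem_RgS h0 hT).1 r.2) hy
  · intro hx
    classical
    rw [← DirectSum.sum_support_decompose 𝒜 x]
    refine Submodule.sum_mem _ (fun d hd => ?_)
    have hne : (decompose 𝒜 x d : S) ≠ 0 := by
      intro h0'
      exact (DFinsupp.mem_support_iff.1 hd) (Subtype.ext h0')
    exact Submodule.subset_span (Set.mem_biUnion (mem_G_iff.1 hx d hne) (decompose 𝒜 x d).2)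

lemma NgS_self_fg {T : Set D} (h0 : (0:D) ∈ T) (hT : ∀ a ∈ T, ∀ b ∈ T, a + b ∈ T) :
    (NgS 𝒜 T T).FG := by
  refine ⟨{1}, le_antisymm ?_ ?_⟩
  · rw [Finset.coe_singleton, Submodule.span_le, Set.singleton_subset_iff]
    exact Submodule.subset_span (Set.mem_biUnion h0 (SetLike.one_mem_graded 𝒜))
  · intro x hx
    have hxG : x ∈ G 𝒜 T := (mem_NgS h0 hT hT).1 hx
    rw [Finset.coe_singleton]
    rw [Submodule.mem_span_singleton]
    exact ⟨⟨x, (mem_RgS h0 hT).2 hxG⟩, by rw [smul_in_S, mul_one]⟩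

lemma mem_span_of_subring {T₀ T' : Set D} (hsub : (RgS 𝒜 T₀ : Set S) ⊆ (RgS 𝒜 T' : Set S))
    (X : Set S) {x : S} (hx : x ∈ Submodule.span (RgS 𝒜 T₀) X) :
    x ∈ Submodule.span (RgS 𝒜 T') X := by
  induction hx using Submodule.span_induction with
  | mem y hy => exact Submodule.subset_span hy
  | zero => exact zero_mem _
  | add u v _ _ hu hv => exact add_mem hu hv
  | smul r y _ hy =>
    rw [smul_in_S]
    have := Submodule.smul_mem _ (⟨(r : S), hsub r.2⟩ : RgS 𝒜 T') hy
    rwa [smul_in_S] at this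

lemma sel_sum_eq {X : Set D} (φ : D →+ ℤ) (ms : Finset ℤ) {x : S} (hx : x ∈ G 𝒜 X)
    (hms : ∀ d ∈ X, φ d ∈ ms) :
    ∑ m ∈ ms, sel 𝒜 (fun d => φ d = m) x = x := by
  apply (decompose 𝒜).injective
  have : decompose 𝒜 (∑ m ∈ ms, sel 𝒜 (fun d => φ d = m) x)
      = ∑ m ∈ ms, decompose 𝒜 (sel 𝒜 (fun d => φ d = m) x) := by
    rw [show (decompose 𝒜 : S → ⨁ i, 𝒜 i) = (DirectSum.decomposeAddEquiv 𝒜 : S →+ ⨁ i, 𝒜 i)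
      from rfl, map_sum]
  rw [this]
  refine DFinsupp.ext fun d => ?_
  apply Subtype.ext
  rw [DFinsupp.finset_sum_apply]
  rw [AddSubmonoidClass.coe_finset_sum]
  have hterm : ∀ m ∈ ms, ((decompose 𝒜 (sel 𝒜 (fun d' => φ d' = m) x) d : S))
      = if φ d = m then (decompose 𝒜 x d : S) else 0 := fun m _ => decompose_sel x d
  rw [Finset.sum_congr rfl hterm]
  rw [Finset.sum_ite_eq ms (φ d) (fun _ => (decompose 𝒜 x d : S))]
  by_cases hms' : φ d ∈ ms
  · rw [if_pos hms']
  · rw [if_neg hms']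
    by_contra h
    exact hms' (hms d (mem_G_iff.1 hx d fun h0 => h h0.symm))

end RgNg

section Master
variable {D S : Type*} [AddCommGroup D] [DecidableEq D] [CommRing S]
  {𝒜 : D → AddSubgroup S} [GradedRing 𝒜]

lemma sel_zero {Q : D → Prop} [DecidablePred Q] : sel 𝒜 Q (0 : S) = 0 := by
  rw [sel, DirectSum.decompose_zero]
  simp

lemma sel_sum {Q : D → Prop} [DecidablePred Q] {α : Type*} (s : Finset α) (g : α → S) :
    sel 𝒜 Q (∑ i ∈ s, g i) = ∑ i ∈ s, sel 𝒜 Q (g i) := by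
  classical
  induction s using Finset.induction with
  | empty => simp [sel_zero]
  | insert a s' h ih => rw [Finset.sum_insert h, sel_add, ih, Finset.sum_insert h]

/-- `Subtype.val` as a linear map over a subring. -/
def valLin (T₀ : Set D) : (RgS 𝒜 T₀) →ₗ[RgS 𝒜 T₀] S where
  toFun := Subtype.val
  map_add' := fun _ _ => rfl
  map_smul' := fun _ _ => rfl

lemma pieceFG {T U : Set D} (h0T : (0:D) ∈ T) (hTT : ∀ a ∈ T, ∀ b ∈ T, a + b ∈ T)
    (hTU : ∀ a ∈ T, ∀ b ∈ U, a + b ∈ U)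
    [IsNoetherianRing (RgS 𝒜 T)] (HN : (NgS 𝒜 T U).FG) (φ : D →+ ℤ) (m : ℤ) :
    (NgS 𝒜 {d ∈ T | φ d = 0} {d ∈ U | φ d = m}).FG := by
  classical
  set T₀ : Set D := {d ∈ T | φ d = 0} with hT₀def
  set Um : Set D := {d ∈ U | φ d = m} with hUmdef
  have h0T₀ : (0:D) ∈ T₀ := ⟨h0T, by simp⟩
  have hT₀T₀ : ∀ a ∈ T₀, ∀ b ∈ T₀, a + b ∈ T₀ :=
    fun a ha b hb => ⟨hTT a ha.1 b hb.1, by rw [map_add, ha.2, hb.2]; ring⟩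
  have hT₀Um : ∀ a ∈ T₀, ∀ b ∈ Um, a + b ∈ Um :=
    fun a ha b hb => ⟨hTU a ha.1 b hb.1, by rw [map_add, ha.2, hb.2]; ring⟩
  have hKle : Submodule.span (RgS 𝒜 T) ((G 𝒜 Um : AddSubgroup S) : Set S) ≤ NgS 𝒜 T U := by
    rw [Submodule.span_le]
    intro x hx
    exact (mem_NgS h0T hTT hTU).2 (G_mono (fun d hd => hd.1) hx)
  have hKfg := fg_of_le_fg HN hKle
  obtain ⟨F, hFsub, hFspan⟩ := exists_finset_span _ hKfg
  refine ⟨F, le_antisymm ?_ ?_⟩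
  · rw [Submodule.span_le]
    intro z hz
    exact (mem_NgS h0T₀ hT₀T₀ hT₀Um).2 (hFsub hz)
  · intro x hx
    have hxG : x ∈ G 𝒜 Um := (mem_NgS h0T₀ hT₀T₀ hT₀Um).1 hx
    have hxK : x ∈ Submodule.span (RgS 𝒜 T) ((F : Set S)) := by
      rw [hFspan]
      exact Submodule.subset_span hxG
    obtain ⟨f, -, hf⟩ := Submodule.mem_span_finset.1 hxK
    have hxsel : x = sel 𝒜 (fun d => φ d = m) x :=
      (sel_eq_self hxG (fun d hd => hd.2)).symm
    have hxe : x = ∑ z ∈ F, sel 𝒜 (fun d => φ d = 0) (f z : S) * z := by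
      conv_lhs => rw [hxsel, ← hf]
      rw [show (∑ z ∈ F, f z • z) = ∑ z ∈ F, (f z : S) * z from
        Finset.sum_congr rfl fun z _ => smul_in_S _ _]
      rw [sel_sum]
      refine Finset.sum_congr rfl fun z hz => ?_
      exact sel_smul_homog φ m (G_mono (fun d hd => hd.2) (hFsub hz)) _
    rw [hxe]
    refine Submodule.sum_mem _ fun z hz => ?_
    have hcoef : sel 𝒜 (fun d => φ d = 0) (f z : S) ∈ G 𝒜 T₀ :=
      sel_mem_G ((mem_RgS h0T hTT).1 (f z).2)
    have := Submodule.smul_mem (Submodule.span (RgS 𝒜 T₀) (F : Set S))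
      (⟨_, (mem_RgS h0T₀ hT₀T₀).2 hcoef⟩ : RgS 𝒜 T₀) (Submodule.subset_span hz)
    rwa [smul_in_S] at this

lemma noetherian_T0 {T : Set D} (h0T : (0:D) ∈ T) (hTT : ∀ a ∈ T, ∀ b ∈ T, a + b ∈ T)
    [IsNoetherianRing (RgS 𝒜 T)] (φ : D →+ ℤ) :
    IsNoetherianRing (RgS 𝒜 {d ∈ T | φ d = 0}) := by
  classical
  set T₀ : Set D := {d ∈ T | φ d = 0} with hT₀def
  rw [isNoetherianRing_iff_ideal_fg]
  intro I
  have h0T₀ : (0:D) ∈ T₀ := ⟨h0T, by simp⟩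
  have hT₀T₀ : ∀ a ∈ T₀, ∀ b ∈ T₀, a + b ∈ T₀ :=
    fun a ha b hb => ⟨hTT a ha.1 b hb.1, by rw [map_add, ha.2, hb.2]; ring⟩
  set J : Submodule (RgS 𝒜 T₀) S := Submodule.map (valLin T₀) I with hJdef
  have hJG : ∀ x ∈ J, x ∈ G 𝒜 T₀ := by
    rintro x ⟨r, _, rfl⟩
    exact (mem_RgS h0T₀ hT₀T₀).1 r.2
  have hKle : Submodule.span (RgS 𝒜 T) ((J : Set S)) ≤ NgS 𝒜 T T := by
    rw [Submodule.span_le]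
    intro x hx
    exact (mem_NgS h0T hTT hTT).2 (G_mono (fun d hd => hd.1) (hJG x hx))
  have hKfg := fg_of_le_fg (NgS_self_fg h0T hTT) hKle
  obtain ⟨F, hFsub, hFspan⟩ := exists_finset_span _ hKfg
  have hJfg : J.FG := by
    refine ⟨F, le_antisymm ?_ ?_⟩
    · rw [Submodule.span_le]
      exact fun z hz => hFsub hz
    · intro x hx
      have hxG : x ∈ G 𝒜 T₀ := hJG x hx
      have hxK : x ∈ Submodule.span (RgS 𝒜 T) ((F : Set S)) := by
        rw [hFspan]
        exact Submodule.subset_span hx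
      obtain ⟨f, -, hf⟩ := Submodule.mem_span_finset.1 hxK
      have hxsel : x = sel 𝒜 (fun d => φ d = 0) x :=
        (sel_eq_self hxG (fun d hd => hd.2)).symm
      have hxe : x = ∑ z ∈ F, sel 𝒜 (fun d => φ d = 0) (f z : S) * z := by
        conv_lhs => rw [hxsel, ← hf]
        rw [show (∑ z ∈ F, f z • z) = ∑ z ∈ F, (f z : S) * z from
          Finset.sum_congr rfl fun z _ => smul_in_S _ _]
        rw [sel_sum]
        refine Finset.sum_congr rfl fun z hz => ?_
        exact sel_smul_homog φ 0 (G_mono (fun d hd => hd.2) (hJG z (hFsub hz))) _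
      rw [hxe]
      refine Submodule.sum_mem _ fun z hz => ?_
      have hcoef : sel 𝒜 (fun d => φ d = 0) (f z : S) ∈ G 𝒜 T₀ :=
        sel_mem_G ((mem_RgS h0T hTT).1 (f z).2)
      have := Submodule.smul_mem (Submodule.span (RgS 𝒜 T₀) (F : Set S))
        (⟨_, (mem_RgS h0T₀ hT₀T₀).2 hcoef⟩ : RgS 𝒜 T₀) (Submodule.subset_span hz)
      rwa [smul_in_S] at this
  rw [hJdef] at hJfg
  exact Submodule.fg_of_fg_map_injective (valLin T₀) (fun a b hab => Subtype.ext hab) hJfg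

end Master

section MasterC
variable {D S : Type*} [AddCommGroup D] [DecidableEq D] [CommRing S]
  {𝒜 : D → AddSubgroup S} [GradedRing 𝒜]

lemma masterC1 {T U : Set D} (h0T : (0:D) ∈ T) (hTT : ∀ a ∈ T, ∀ b ∈ T, a + b ∈ T)
    (hTU : ∀ a ∈ T, ∀ b ∈ U, a + b ∈ U)
    [IsNoetherianRing (RgS 𝒜 T)] (HN : (NgS 𝒜 T U).FG) (φ : D →+ ℤ) (k : ℤ)
    (Q : Submodule (RgS 𝒜 {d ∈ T | 0 ≤ φ d}) S)
    (hQ : (Q : Set S) ⊆ (G 𝒜 {c ∈ U | k ≤ φ c} : AddSubgroup S)) : Q.FG := by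
  classical
  revert hQ
  revert Q
  set T' : Set D := {d ∈ T | 0 ≤ φ d} with hT'def
  set T₀ : Set D := {d ∈ T | φ d = 0} with hT₀def
  set U' : Set D := {c ∈ U | k ≤ φ c} with hU'def
  intro Q hQ
  have h0T' : (0:D) ∈ T' := ⟨h0T, by simp⟩
  have hT'T' : ∀ a ∈ T', ∀ b ∈ T', a + b ∈ T' := by
    intro a ha b hb
    have ha2 := ha.2; have hb2 := hb.2
    exact ⟨hTT a ha.1 b hb.1, by rw [map_add]; omega⟩
  have h0T₀ : (0:D) ∈ T₀ := ⟨h0T, by simp⟩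
  have hT₀T₀ : ∀ a ∈ T₀, ∀ b ∈ T₀, a + b ∈ T₀ := by
    intro a ha b hb
    have ha2 := ha.2; have hb2 := hb.2
    exact ⟨hTT a ha.1 b hb.1, by rw [map_add]; omega⟩
  have hT'U' : ∀ a ∈ T', ∀ b ∈ U', a + b ∈ U' := by
    intro a ha b hb
    have ha2 := ha.2; have hb2 := hb.2
    exact ⟨hTU a ha.1 b hb.1, by rw [map_add]; omega⟩
  have hsub : ((RgS 𝒜 T₀ : Subring S) : Set S) ⊆ ((RgS 𝒜 T' : Subring S) : Set S) := by
    intro x hx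
    refine (mem_RgS h0T' hT'T').2 (G_mono ?_ ((mem_RgS h0T₀ hT₀T₀).1 hx))
    intro d hd
    have hd2 := hd.2
    exact ⟨hd.1, by omega⟩
  -- Step 1: finitely many elements of Q spanning Q over the big ring
  have hKle : Submodule.span (RgS 𝒜 T) ((Q : Set S)) ≤ NgS 𝒜 T U := by
    rw [Submodule.span_le]
    intro x hx
    exact (mem_NgS h0T hTT hTU).2 (G_mono (fun d hd => hd.1) (hQ hx))
  have hKfg := fg_of_le_fg HN hKle
  obtain ⟨F, hFQ, hFspan⟩ := exists_finset_span _ hKfg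
  -- Step 2: degree bound
  set B : ℤ := 1 + ((F.sup fun z => ((decompose 𝒜 z).support.sup fun d => (φ d).toNat)) : ℕ)
    with hBdef
  have hB : ∀ z ∈ F, ∀ d, (decompose 𝒜 z d : S) ≠ 0 → φ d < B := by
    intro z hz d hd
    have hdsupp : d ∈ (decompose 𝒜 z).support := by
      rw [DFinsupp.mem_support_iff]
      exact fun h => hd (by rw [h]; rfl)
    have h1 : (φ d).toNat ≤ (decompose 𝒜 z).support.sup fun d => (φ d).toNat :=
      Finset.le_sup (f := fun d => (φ d).toNat) hdsupp
    have h2 : ((decompose 𝒜 z).support.sup fun d => (φ d).toNat)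
        ≤ F.sup fun z => ((decompose 𝒜 z).support.sup fun d => (φ d).toNat) :=
      Finset.le_sup (f := fun z => ((decompose 𝒜 z).support.sup fun d => (φ d).toNat)) hz
    have h3 : φ d ≤ ((φ d).toNat : ℤ) := Int.self_le_toNat _
    have h4 : (((decompose 𝒜 z).support.sup fun d => (φ d).toNat : ℕ) : ℤ)
        ≤ ((F.sup fun z => ((decompose 𝒜 z).support.sup fun d => (φ d).toNat) : ℕ) : ℤ) := by
      exact_mod_cast h2
    have h5 : (((φ d).toNat : ℕ) : ℤ)
        ≤ (((decompose 𝒜 z).support.sup fun d => (φ d).toNat : ℕ) : ℤ) := by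
      exact_mod_cast h1
    omega
  -- Step 3: the bounded strip V
  set V : Set D := {c ∈ U | k ≤ φ c ∧ φ c < B} with hVdef
  have hT₀V : ∀ a ∈ T₀, ∀ b ∈ V, a + b ∈ V := by
    intro a ha b hb
    have ha2 := ha.2; have hb2 := hb.2.1; have hb3 := hb.2.2
    exact ⟨hTU a ha.1 b hb.1, by rw [map_add]; omega⟩
  haveI hRT₀ : IsNoetherianRing (RgS 𝒜 T₀) := noetherian_T0 h0T hTT φ
  -- Step 4: NgS T₀ V is finitely generated
  have hNgV_fg : (NgS 𝒜 T₀ V).FG := by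
    have hpc : ∀ m : ℤ, ∃ Fm : Finset S, (↑Fm ⊆ ⋃ d ∈ {c ∈ U | φ c = m}, ((𝒜 d : Set S))) ∧
        Submodule.span (RgS 𝒜 T₀) (↑Fm : Set S) = NgS 𝒜 T₀ {c ∈ U | φ c = m} := by
      intro m
      exact exists_finset_span _ (pieceFG h0T hTT hTU HN φ m)
    choose Fm hFm1 hFm2 using hpc
    refine ⟨(Finset.Ico k B).biUnion Fm, le_antisymm ?_ ?_⟩
    · rw [Submodule.span_le]
      intro y hy
      simp only [Finset.coe_biUnion, Set.mem_iUnion, Finset.mem_coe, Finset.mem_Ico] at hy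
      obtain ⟨m, hm, hy⟩ := hy
      obtain ⟨hm1, hm2⟩ := hm
      have := hFm1 m hy
      obtain ⟨c, hc, hyc⟩ := Set.mem_iUnion₂.1 this
      have hc2 := hc.2
      exact Submodule.subset_span (Set.mem_biUnion (⟨hc.1, by omega⟩ : c ∈ V) hyc)
    · rw [NgS, Submodule.span_le]
      intro y hy
      obtain ⟨c, hc, hyc⟩ := Set.mem_iUnion₂.1 hy
      have hy2 : y ∈ NgS 𝒜 T₀ {c' ∈ U | φ c' = φ c} := by
        refine Submodule.subset_span ?_
        exact Set.mem_biUnion ⟨hc.1, rfl⟩ hyc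
      rw [← hFm2 (φ c)] at hy2
      refine Submodule.span_le.2 ?_ hy2
      intro w hw
      refine Submodule.subset_span ?_
      simp only [Finset.coe_biUnion, Set.mem_iUnion, Finset.mem_coe, Finset.mem_Ico]
      exact ⟨φ c, ⟨hc.2.1, hc.2.2⟩, hw⟩
  -- Step 5: E = Q ∩ (strip)
  set E : Submodule (RgS 𝒜 T₀) S :=
    { carrier := (Q : Set S) ∩ (G 𝒜 V : AddSubgroup S)
      add_mem' := fun ha hb => ⟨Q.add_mem ha.1 hb.1, add_mem ha.2 hb.2⟩
      zero_mem' := ⟨Q.zero_mem, zero_mem _⟩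
      smul_mem' := by
        rintro r x ⟨hxQ, hxV⟩
        constructor
        · have := Q.smul_mem (⟨(r : S), hsub r.2⟩ : RgS 𝒜 T') hxQ
          rwa [smul_in_S] at this
        · rw [smul_in_S]
          exact mul_mem_G hT₀V ((mem_RgS h0T₀ hT₀T₀).1 r.2) hxV } with hEdef
  have hEle : E ≤ NgS 𝒜 T₀ V := fun x hx => (mem_NgS h0T₀ hT₀T₀ hT₀V).2 hx.2
  have hEfg : E.FG := fg_of_le_fg hNgV_fg hEle
  obtain ⟨F₂, hF₂⟩ := hEfg
  have hF₂E : (F₂ : Set S) ⊆ (E : Set S) := by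
    intro x hx
    rw [← hF₂]
    exact Submodule.subset_span hx
  -- Step 6: conclusion
  refine ⟨F ∪ F₂, le_antisymm ?_ ?_⟩
  · rw [Finset.coe_union, Submodule.span_le, Set.union_subset_iff]
    exact ⟨hFQ, fun z hz => (hF₂E hz).1⟩
  · intro x hx
    have hxK : x ∈ Submodule.span (RgS 𝒜 T) ((F : Set S)) := by
      rw [hFspan]
      exact Submodule.subset_span hx
    obtain ⟨f, -, hf⟩ := Submodule.mem_span_finset.1 hxK
    set w : S := ∑ z ∈ F, sel 𝒜 (fun d => 0 ≤ φ d) (f z : S) * z with hwdef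
    have hwmem : w ∈ Submodule.span (RgS 𝒜 T') ((F : Set S)) := by
      refine Submodule.sum_mem _ fun z hz => ?_
      have hcoef : sel 𝒜 (fun d => 0 ≤ φ d) (f z : S) ∈ G 𝒜 T' :=
        sel_mem_G ((mem_RgS h0T hTT).1 (f z).2)
      have := Submodule.smul_mem (Submodule.span (RgS 𝒜 T') (F : Set S))
        (⟨_, (mem_RgS h0T' hT'T').2 hcoef⟩ : RgS 𝒜 T') (Submodule.subset_span hz)
      rwa [smul_in_S] at this
    have hspanFQ : Submodule.span (RgS 𝒜 T') ((F : Set S)) ≤ Q := Submodule.span_le.2 hFQ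
    have hwQ : w ∈ Q := hspanFQ hwmem
    set y : S := x - w with hydef
    have hyQ : y ∈ Q := Q.sub_mem hx hwQ
    have hyexp : y = ∑ z ∈ F, sel 𝒜 (fun d => ¬ 0 ≤ φ d) (f z : S) * z := by
      rw [hydef, hwdef, ← hf]
      rw [show (∑ z ∈ F, f z • z) = ∑ z ∈ F, (f z : S) * z from
        Finset.sum_congr rfl fun z _ => smul_in_S _ _]
      rw [← Finset.sum_sub_distrib]
      refine Finset.sum_congr rfl fun z hz => ?_
      rw [← sub_mul, sel_compl_eq]
    have hyB : y ∈ G 𝒜 {c | φ c < B} := by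
      rw [hyexp]
      refine AddSubgroup.sum_mem _ fun z hz => ?_
      have hcoef : sel 𝒜 (fun d => ¬ 0 ≤ φ d) (f z : S) ∈ G 𝒜 {d ∈ T | ¬ 0 ≤ φ d} :=
        sel_mem_G ((mem_RgS h0T hTT).1 (f z).2)
      have hzU' : z ∈ G 𝒜 U' := hQ (hFQ hz)
      have hzB : z ∈ G 𝒜 {c | φ c < B} :=
        mem_G_of_decompose fun d hd => hB z hz d hd
      have hzmem : z ∈ G 𝒜 (U' ∩ {c | φ c < B}) := mem_G_inter hzU' hzB
      refine mul_mem_G ?_ hcoef hzmem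
      intro a ha b hb
      have ha2 : ¬ 0 ≤ φ a := ha.2
      have hb2 : φ b < B := hb.2
      show φ (a + b) < B
      rw [map_add]
      omega
    have hyV : y ∈ G 𝒜 V := by
      have hyU' : y ∈ G 𝒜 U' := hQ hyQ
      refine G_mono ?_ (mem_G_inter hyU' hyB)
      intro c hc
      exact ⟨hc.1.1, hc.1.2, hc.2⟩
    have hyE : y ∈ E := by exact ⟨hyQ, hyV⟩
    have hyspan : y ∈ Submodule.span (RgS 𝒜 T') ((F₂ : Set S)) := by
      rw [← hF₂] at hyE
      exact mem_span_of_subring hsub _ hyE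
    have hxy : x = w + y := by rw [hydef]; ring
    rw [hxy, Finset.coe_union]
    exact add_mem (Submodule.span_mono Set.subset_union_left hwmem)
      (Submodule.span_mono Set.subset_union_right hyspan)

lemma masterC2 {T : Set D} (h0T : (0:D) ∈ T) (hTT : ∀ a ∈ T, ∀ b ∈ T, a + b ∈ T)
    [IsNoetherianRing (RgS 𝒜 T)] (φ : D →+ ℤ) :
    IsNoetherianRing (RgS 𝒜 {d ∈ T | 0 ≤ φ d}) := by
  classical
  set T' : Set D := {d ∈ T | 0 ≤ φ d} with hT'def
  have h0T' : (0:D) ∈ T' := ⟨h0T, by simp⟩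
  have hT'T' : ∀ a ∈ T', ∀ b ∈ T', a + b ∈ T' := by
    intro a ha b hb
    have ha2 := ha.2; have hb2 := hb.2
    exact ⟨hTT a ha.1 b hb.1, by rw [map_add]; omega⟩
  rw [isNoetherianRing_iff_ideal_fg]
  intro I
  have hQ : ((Submodule.map (valLin T') I : Submodule (RgS 𝒜 T') S) : Set S)
      ⊆ (G 𝒜 {c ∈ T | 0 ≤ φ c} : AddSubgroup S) := by
    rintro x ⟨r, _, rfl⟩
    exact (mem_RgS h0T' hT'T').1 r.2
  have hJfg := masterC1 h0T hTT hTT (NgS_self_fg h0T hTT) φ 0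
    (Submodule.map (valLin T') I) hQ
  exact Submodule.fg_of_fg_map_injective (valLin T') (fun a b hab => Subtype.ext hab) hJfg

end MasterC

section MasterD
variable {D S : Type*} [AddCommGroup D] [DecidableEq D] [CommRing S]
  {𝒜 : D → AddSubgroup S} [GradedRing 𝒜] [IsNoetherianRing S]

lemma mem_RgS_univ {T : Set D} (hT : ∀ d, d ∈ T) (x : S) : x ∈ RgS 𝒜 T := by
  classical
  rw [← DirectSum.sum_support_decompose 𝒜 x]
  refine Subring.sum_mem _ (fun d _ => ?_)
  exact Subring.subset_closure (Set.mem_biUnion (hT d) (decompose 𝒜 x d).2)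

lemma RgS_top_noeth {T : Set D} (hT : ∀ d, d ∈ T) : IsNoetherianRing (RgS 𝒜 T) := by
  have heq : RgS 𝒜 T = (⊤ : Subring S) := by
    refine le_antisymm le_top ?_
    intro x _
    exact mem_RgS_univ hT x
  rw [heq]
  exact isNoetherianRing_of_ringEquiv S Subring.topEquiv.symm

lemma NgS_univ_fg {T U : Set D} (hT : ∀ d, d ∈ T) (hU : ∀ d, d ∈ U) :
    (NgS 𝒜 T U).FG := by
  refine ⟨{1}, le_antisymm ?_ ?_⟩
  · rw [Finset.coe_singleton, Submodule.span_le, Set.singleton_subset_iff]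
    exact Submodule.subset_span (Set.mem_biUnion (hU 0) (SetLike.one_mem_graded 𝒜))
  · intro x _
    rw [Finset.coe_singleton, Submodule.mem_span_singleton]
    exact ⟨⟨x, mem_RgS_univ hT x⟩, by rw [smul_in_S, mul_one]⟩

lemma masterD (L : List ((D →+ ℤ) × ℤ)) :
    IsNoetherianRing (RgS 𝒜 {d : D | ∀ p ∈ L, (0:ℤ) ≤ p.1 d}) ∧
    (NgS 𝒜 {d : D | ∀ p ∈ L, (0:ℤ) ≤ p.1 d} {c : D | ∀ p ∈ L, p.2 ≤ p.1 c}).FG := by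
  induction L with
  | nil =>
    constructor
    · exact RgS_top_noeth (fun d p hp => absurd hp List.not_mem_nil)
    · exact NgS_univ_fg (fun d p hp => absurd hp List.not_mem_nil)
        (fun d p hp => absurd hp List.not_mem_nil)
  | cons p L' ih =>
    obtain ⟨ih1, ih2⟩ := ih
    have hT : {d : D | ∀ q ∈ p :: L', (0:ℤ) ≤ q.1 d}
        = {d ∈ {d : D | ∀ q ∈ L', (0:ℤ) ≤ q.1 d} | 0 ≤ p.1 d} := by
      ext d
      simp only [Set.mem_setOf_eq, List.forall_mem_cons, Set.mem_sep_iff]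
      tauto
    have hU : {c : D | ∀ q ∈ p :: L', q.2 ≤ q.1 c}
        = {c ∈ {c : D | ∀ q ∈ L', q.2 ≤ q.1 c} | p.2 ≤ p.1 c} := by
      ext c
      simp only [Set.mem_setOf_eq, List.forall_mem_cons, Set.mem_sep_iff]
      tauto
    have h0T : (0:D) ∈ {d : D | ∀ q ∈ L', (0:ℤ) ≤ q.1 d} := fun q _ => by simp
    have hTT : ∀ a ∈ {d : D | ∀ q ∈ L', (0:ℤ) ≤ q.1 d},
        ∀ b ∈ {d : D | ∀ q ∈ L', (0:ℤ) ≤ q.1 d}, a + b ∈ {d : D | ∀ q ∈ L', (0:ℤ) ≤ q.1 d} := by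
      intro a ha b hb q hq
      have h1 := ha q hq; have h2 := hb q hq
      rw [map_add]; omega
    have hTU : ∀ a ∈ {d : D | ∀ q ∈ L', (0:ℤ) ≤ q.1 d},
        ∀ b ∈ {c : D | ∀ q ∈ L', q.2 ≤ q.1 c}, a + b ∈ {c : D | ∀ q ∈ L', q.2 ≤ q.1 c} := by
      intro a ha b hb q hq
      have h1 := ha q hq; have h2 := hb q hq
      rw [map_add]; omega
    haveI := ih1
    constructor
    · rw [hT]
      exact masterC2 h0T hTT p.1
    · rw [hT, hU]
      refine masterC1 h0T hTT hTU ih2 p.1 p.2 _ ?_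
      have h0T' : (0:D) ∈ {d ∈ {d : D | ∀ q ∈ L', (0:ℤ) ≤ q.1 d} | 0 ≤ p.1 d} :=
        ⟨h0T, by simp⟩
      have hT'T' : ∀ a ∈ {d ∈ {d : D | ∀ q ∈ L', (0:ℤ) ≤ q.1 d} | 0 ≤ p.1 d},
          ∀ b ∈ {d ∈ {d : D | ∀ q ∈ L', (0:ℤ) ≤ q.1 d} | 0 ≤ p.1 d},
          a + b ∈ {d ∈ {d : D | ∀ q ∈ L', (0:ℤ) ≤ q.1 d} | 0 ≤ p.1 d} := by
        intro a ha b hb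
        have ha2 := ha.2; have hb2 := hb.2
        exact ⟨hTT a ha.1 b hb.1, by rw [map_add]; omega⟩
      have hT'U' : ∀ a ∈ {d ∈ {d : D | ∀ q ∈ L', (0:ℤ) ≤ q.1 d} | 0 ≤ p.1 d},
          ∀ b ∈ {c ∈ {c : D | ∀ q ∈ L', q.2 ≤ q.1 c} | p.2 ≤ p.1 c},
          a + b ∈ {c ∈ {c : D | ∀ q ∈ L', q.2 ≤ q.1 c} | p.2 ≤ p.1 c} := by
        intro a ha b hb
        have ha2 := ha.2; have hb2 := hb.2
        exact ⟨hTU a ha.1 b hb.1, by rw [map_add]; omega⟩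
      intro x hx
      exact (mem_NgS h0T' hT'T' hT'U').1 hx

end MasterD

/-- Let `S` be a noetherian ring graded by a free abelian group `D` of finite
rank, let `M = ⊕ ℕ·bⱼ (j ∈ J)` be a quadrant (generated by part of a `ℤ`-basis `b` of `D`),
and let `e ∈ D`. Then `S_{M+e} = ⊕_{d ∈ M} S_{d+e}` is a finitely generated module over the
Veronese subring `S_M` (here `S_M` is the subring generated by the pieces of degrees in `M`,
and `S_{M+e}` is its span, as an `S_M`-submodule of `S`, of the pieces of degrees in `M+e`). -/
theorem stmt_4 {ι D S : Type*} [Fintype ι] [AddCommGroup D] [DecidableEq D]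
    [CommRing S] (𝒜 : D → AddSubgroup S) [GradedRing 𝒜] [IsNoetherianRing S]
    (b : Module.Basis ι ℤ D) (J : Set ι) (e : D) :
    (Submodule.span
      (Subring.closure (⋃ d ∈ AddSubmonoid.closure (⇑b '' J), (𝒜 d : Set S)))
      (⋃ d ∈ AddSubmonoid.closure (⇑b '' J), (𝒜 (d + e) : Set S))).FG := by
  classical
  set c : ι → (D →+ ℤ) := fun j => (b.coord j).toAddMonoidHom with hc
  set L : List ((D →+ ℤ) × ℤ) := Finset.univ.toList.flatMap
    (fun j => if j ∈ J then [(c j, c j e)] else [(c j, c j e), (-(c j), (-(c j)) e)]) with hL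
  have hLmem : ∀ j : ι, ∀ q ∈ (if j ∈ J then [(c j, c j e)]
      else [(c j, c j e), (-(c j), (-(c j)) e)]), q ∈ L := by
    intro j q hq
    rw [hL]
    exact List.mem_flatMap.2 ⟨j, by simp, hq⟩
  have hpe : ∀ p ∈ L, p.2 = p.1 e := by
    intro p hp
    rw [hL] at hp
    obtain ⟨j, _, hp⟩ := List.mem_flatMap.1 hp
    by_cases hj : j ∈ J
    · rw [if_pos hj] at hp
      simp only [List.mem_singleton] at hp
      subst hp; rfl
    · rw [if_neg hj] at hp
      simp only [List.mem_cons, List.mem_singleton, List.not_mem_nil, or_false] at hp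
      rcases hp with hp | hp <;> (subst hp; rfl)
  have hcb : ∀ j j' : ι, (c j') (b j) = if j = j' then 1 else 0 := by
    intro j j'
    simp [hc, Module.Basis.coord_apply, Module.Basis.repr_self, Finsupp.single_apply]
  have hTset : (↑(AddSubmonoid.closure (⇑b '' J)) : Set D)
      = {d : D | ∀ p ∈ L, (0:ℤ) ≤ p.1 d} := by
    apply le_antisymm
    · intro d hd
      induction hd using AddSubmonoid.closure_induction with
      | mem x hx =>
        obtain ⟨j, hjJ, rfl⟩ := hx
        intro p hp
        rw [hL] at hp
        obtain ⟨j', _, hp⟩ := List.mem_flatMap.1 hp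
        by_cases hj' : j' ∈ J
        · rw [if_pos hj'] at hp
          simp only [List.mem_singleton] at hp
          subst hp
          show (0:ℤ) ≤ (c j') (b j)
          rw [hcb]
          split <;> omega
        · rw [if_neg hj'] at hp
          simp only [List.mem_cons, List.mem_singleton, List.not_mem_nil, or_false] at hp
          have hne : j ≠ j' := fun h => hj' (h ▸ hjJ)
          rcases hp with hp | hp <;> subst hp
          · show (0:ℤ) ≤ (c j') (b j)
            rw [hcb, if_neg hne]
          · show (0:ℤ) ≤ (-(c j')) (b j)
            rw [AddMonoidHom.neg_apply, hcb, if_neg hne, neg_zero]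
      | zero => intro p hp; rw [map_zero]
      | add x y _ _ hx hy =>
        intro p hp
        have h1 := hx p hp; have h2 := hy p hp
        rw [map_add]; omega
    · intro d hd
      have hrepr : ∑ i : ι, b.repr d i • b i = d := Module.Basis.sum_repr b d
      rw [← hrepr]
      refine AddSubmonoid.sum_mem _ (fun i _ => ?_)
      by_cases hiJ : i ∈ J
      · have hn : (0:ℤ) ≤ b.repr d i := by
          have hmem : (c i, c i e) ∈ L := hLmem i _ (by rw [if_pos hiJ]; simp)
          have := hd _ hmem
          simpa [hc, Module.Basis.coord_apply] using this
        rw [← Int.toNat_of_nonneg hn, natCast_zsmul]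
        exact nsmul_mem (AddSubmonoid.subset_closure (show b i ∈ ⇑b '' J from ⟨i, hiJ, rfl⟩)) _
      · have hmem1 : (c i, c i e) ∈ L := hLmem i _ (by rw [if_neg hiJ]; simp)
        have hmem2 : (-(c i), (-(c i)) e) ∈ L := hLmem i _ (by rw [if_neg hiJ]; simp)
        have h1 := hd _ hmem1
        have h2 := hd _ hmem2
        simp only [hc, AddMonoidHom.neg_apply, LinearMap.toAddMonoidHom_coe,
          Module.Basis.coord_apply] at h1 h2
        have hzero : b.repr d i = 0 := by omega
        rw [hzero, zero_smul]
        exact zero_mem _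
  obtain ⟨_, hfg⟩ := masterD (𝒜 := 𝒜) (S := S) L
  have hC : Subring.closure (⋃ d ∈ AddSubmonoid.closure (⇑b '' J), (𝒜 d : Set S))
      = RgS 𝒜 {d : D | ∀ p ∈ L, (0:ℤ) ≤ p.1 d} := by
    rw [show Subring.closure (⋃ d ∈ AddSubmonoid.closure (⇑b '' J), (𝒜 d : Set S))
      = RgS 𝒜 (↑(AddSubmonoid.closure (⇑b '' J)) : Set D) from rfl, hTset]
  rw [hC]
  have hspan : Submodule.span (RgS 𝒜 {d : D | ∀ p ∈ L, (0:ℤ) ≤ p.1 d})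
      (⋃ d ∈ AddSubmonoid.closure (⇑b '' J), (𝒜 (d + e) : Set S))
      = NgS 𝒜 {d : D | ∀ p ∈ L, (0:ℤ) ≤ p.1 d} {c' : D | ∀ p ∈ L, p.2 ≤ p.1 c'} := by
    apply le_antisymm
    · rw [Submodule.span_le]
      intro x hx
      obtain ⟨d, hdM, hx⟩ := Set.mem_iUnion₂.1 hx
      refine Submodule.subset_span (Set.mem_biUnion ?_ hx)
      intro p hp
      have hdT : d ∈ {d : D | ∀ p ∈ L, (0:ℤ) ≤ p.1 d} := hTset ▸ hdM
      have h1 := hdT p hp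
      have h2 := hpe p hp
      rw [map_add]; omega
    · rw [NgS, Submodule.span_le]
      intro x hx
      obtain ⟨c', hc', hx⟩ := Set.mem_iUnion₂.1 hx
      refine Submodule.subset_span ?_
      have hmem : c' - e ∈ AddSubmonoid.closure (⇑b '' J) := by
        have : c' - e ∈ {d : D | ∀ p ∈ L, (0:ℤ) ≤ p.1 d} := by
          intro p hp
          have h1 := hc' p hp
          have h2 := hpe p hp
          rw [map_sub]; omega
        rw [← SetLike.mem_coe, hTset]
        exact this
      refine Set.mem_biUnion hmem ?_
      rwa [sub_add_cancel]
  rw [hspan]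
  exact hfg
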